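/- Let (N,+) be a finite group (written additively, not necessarily abelian) and let 𝓑 = {B₁,…,Bₛ} be a difference family on N. Then the development dev 𝓑 = {B + n : B ∈ 𝓑, n ∈ N} is a set 2-design: all its blocks have the same size k and there is a constant λ such that every pair of distinct points a, b ∈ N is contained in exactly λ blocks of dev 𝓑. -/

import Mathlib

/-- If `𝓑` is a difference family on a finite (not necessarily abelian)
additive group `N`, then the development `dev 𝓑 = {B + n : B ∈ 𝓑, n ∈ N}` is a set
2-design: all blocks have size `k` and every pair of distinct points lies in exactly
`lam` blocks. -/
theorem difference_family_development_is_2design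
    {N : Type*} [AddGroup N] [Fintype N] [DecidableEq N]
    (𝓑 : Finset (Finset N)) (k lam : ℕ)
    (hsize : ∀ B ∈ 𝓑, B.card = k)
    (htrans : ∀ B ∈ 𝓑, ∀ C ∈ 𝓑, ∀ n : N,
      B.image (· + n) = C ↔ B = C ∧ n = 0)
    (hdiff : ∀ d : N, d ≠ 0 →
      ((𝓑.sigma fun B => B ×ˢ B).filter
        (fun p => p.2.1 - p.2.2 = d)).card = lam) :
    (∀ A ∈ (𝓑 ×ˢ (Finset.univ : Finset N)).image
        (fun p : Finset N × N => p.1.image (· + p.2)),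
      A.card = k) ∧
    (∀ a b : N, a ≠ b →
      (((𝓑 ×ˢ (Finset.univ : Finset N)).image
          (fun p : Finset N × N => p.1.image (· + p.2))).filter
        (fun A => a ∈ A ∧ b ∈ A)).card = lam) := by
  have injf : Set.InjOn (fun p : Finset N × N => p.1.image (· + p.2))
      ↑(𝓑 ×ˢ (Finset.univ : Finset N)) := by
    rintro ⟨B, n⟩ hB ⟨C, m⟩ hC h
    simp only [Finset.coe_product, Set.mem_prod, Finset.mem_coe] at hB hC
    simp only at h
    have h2 : B.image (· + (n - m)) = C := by
      have := congrArg (Finset.image (· + (-m))) h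
      rw [Finset.image_image, Finset.image_image] at this
      convert this using 2
      · ext x; simp [Function.comp, sub_eq_add_neg, add_assoc]
      · have : (fun x => x + m) ∘ (fun x : N => x) = (· + m) := rfl
        ext x; simp [Function.comp, add_assoc]
    have := (htrans B hB.1 C hC.1 (n - m)).mp h2
    have hnm : n = m := by
      have := this.2
      rwa [sub_eq_zero] at this
    exact Prod.ext this.1 hnm
  constructor
  · intro A hA
    obtain ⟨⟨B, n⟩, hBn, rfl⟩ := Finset.mem_image.mp hA
    simp only [Finset.mem_product] at hBn
    rw [Finset.card_image_of_injective _ (add_left_injective n)]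
    exact hsize B hBn.1
  · intro a b hab
    rw [Finset.filter_image, Finset.card_image_of_injOn
      (injf.mono (Finset.coe_subset.mpr (Finset.filter_subset _ _)))]
    rw [← hdiff (a - b) (sub_ne_zero.mpr hab)]
    apply Finset.card_nbij'
      (i := fun p : Finset N × N => ⟨p.1, (a - p.2, b - p.2)⟩)
      (j := fun q : (B : Finset N) × (N × N) => (q.1, -q.2.1 + a))
    · intro p hp
      obtain ⟨B, n⟩ := p
      simp only [Finset.mem_coe, Finset.mem_filter, Finset.mem_product, Finset.mem_image] at hp
      obtain ⟨⟨hB, -⟩, ⟨x, hx, hxa⟩, ⟨y, hy, hyb⟩⟩ := hp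
      have hxan : x = a - n := by rw [← hxa]; simp [sub_eq_add_neg, add_assoc]
      have hybn : y = b - n := by rw [← hyb]; simp [sub_eq_add_neg, add_assoc]
      simp only [Finset.mem_coe, Finset.mem_filter, Finset.mem_sigma, Finset.mem_product]
      refine ⟨⟨hB, hxan ▸ hx, hybn ▸ hy⟩, ?_⟩
      simp [sub_eq_add_neg, neg_add_rev, add_assoc]
    · rintro ⟨B, x, y⟩ hq
      simp only [Finset.mem_coe, Finset.mem_filter, Finset.mem_sigma, Finset.mem_product] at hq
      obtain ⟨⟨hB, hx, hy⟩, hd⟩ := hq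
      simp only [Finset.mem_coe, Finset.mem_filter, Finset.mem_product, Finset.mem_image,
        Finset.mem_univ, and_true]
      refine ⟨hB, ⟨x, hx, by simp [add_assoc]⟩, ⟨y, hy, ?_⟩⟩
      have : y = b - a + x := by
        have : x + -y = a + -b := by simpa [sub_eq_add_neg] using hd
        have h2 : -y = -x + (a + -b) := by rw [← this]; simp
        calc y = -(-y) := by simp
          _ = -(-x + (a + -b)) := by rw [h2]
          _ = b - a + x := by simp [sub_eq_add_neg, add_assoc]
      rw [this]; simp [sub_eq_add_neg, add_assoc]
    · rintro ⟨B, n⟩ hp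
      simp only [Finset.mem_filter, Finset.mem_product, Finset.mem_image] at hp
      simp [sub_eq_add_neg, neg_add_rev, add_assoc]
    · rintro ⟨B, x, y⟩ hq
      simp only [Finset.mem_coe, Finset.mem_filter, Finset.mem_sigma, Finset.mem_product] at hq
      obtain ⟨⟨hB, hx, hy⟩, hd⟩ := hq
      have h1 : a - (-x + a) = x := by simp [sub_eq_add_neg, neg_add_rev, add_assoc]
      have h2 : b - (-x + a) = y := by
        have : x + -y = a + -b := by simpa [sub_eq_add_neg] using hd
        have h3 : -y = -x + (a + -b) := by rw [← this]; simp
        have h4 : y = -(-x + (a + -b)) := by rw [← h3]; simp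
        rw [h4]; simp [sub_eq_add_neg, neg_add_rev, add_assoc]
      simp [h1, h2]
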